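/- Let s ∈ ℝ, 0 < p < ∞ and 0 < q < ∞, and let β ≥ 1. There exist constants 0 < c ≤ C, depending only on a, d, β, s, p, q, such that for every family of complex numbers (s_{R,n})_{R∈𝒦, n∈ℕ₀^d}: c·A ≤ ( ∑_{R∈𝒦} ‖ ∑_{n∈ℕ₀^d} |R|^{s/ν + 1/2} |s_{R,n}| 𝟙_{U(R,n)} ‖_{L_p(ℝ^d)}^q )^{1/q} ≤ C·A, where A := ( ∑_{R∈𝒦} |R|^{(s/ν + 1/2 − 1/p)q} ( ∑_{n∈ℕ₀^d} |s_{R,n}|^p )^{q/p} )^{1/q} (both sides being simultaneously finite or infinite). -/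

import Mathlib

open MeasureTheory

noncomputable section

/-- Number of outer intervals on each side at level `j`: `⌈j^{a-1}⌉`. -/
def mOut (a : ℝ) (j : ℕ) : ℤ := ⌈(j : ℝ) ^ (a - 1)⌉

/-- Number of inner intervals at level `j`: `⌈j^{a}⌉`. -/
def mIn (a : ℝ) (j : ℕ) : ℤ := ⌈(j : ℝ) ^ a⌉

/-- Total number of intervals in the partition `𝒜_j^i`. -/
def numIv (a : ℝ) (j : ℕ) : ℤ := mIn a j + 2 * mOut a j

/-- Common length of the outer intervals. -/
def lenO (a β : ℝ) (j : ℕ) : ℝ :=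
  (((j : ℝ) + 1) ^ (a * β) - (j : ℝ) ^ (a * β)) / ((mOut a j : ℤ) : ℝ)

/-- Common length of the inner intervals. -/
def lenI (a β : ℝ) (j : ℕ) : ℝ :=
  2 * (j : ℝ) ^ (a * β) / ((mIn a j : ℤ) : ℝ)

/-- The `k`-th knot (from the left, `k = 0, …, numIv`) of the partition `𝒜_j^i` of
`A_j^i = [−(j+1)^{aβ}, (j+1)^{aβ})`: the two components of `A_j^i ∖ B_j^i` are divided
into `⌈j^{a-1}⌉` equal intervals each, and `B_j^i = [−j^{aβ}, j^{aβ})` into `⌈j^{a}⌉`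
equal intervals. -/
def knot (a β : ℝ) (j : ℕ) (k : ℤ) : ℝ :=
  if k ≤ mOut a j then -((j : ℝ) + 1) ^ (a * β) + (k : ℝ) * lenO a β j
  else if k ≤ mOut a j + mIn a j then
    -(j : ℝ) ^ (a * β) + ((k - mOut a j : ℤ) : ℝ) * lenI a β j
  else (j : ℝ) ^ (a * β) + ((k - mOut a j - mIn a j : ℤ) : ℝ) * lenO a β j

/-- The `k`-th interval of the partition `𝒜_j^i`. -/
def ivl (a β : ℝ) (j : ℕ) (k : ℤ) : Set ℝ :=
  Set.Ico (knot a β j k) (knot a β j (k + 1))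

/-- The partition `𝒜_j^i` (with `a = a_i`), as a family of subsets of `ℝ`. -/
def partA (a β : ℝ) (j : ℕ) : Set (Set ℝ) :=
  {I | ∃ k : ℤ, 0 ≤ k ∧ k < numIv a j ∧ I = ivl a β j k}

/-- The index `k` corresponds to an inner interval. -/
def isInnerIdx (a : ℝ) (j : ℕ) (k : ℤ) : Prop :=
  mOut a j ≤ k ∧ k < mOut a j + mIn a j

/-- The family `ℬ_j^i` of inner intervals. -/
def partInner (a β : ℝ) (j : ℕ) : Set (Set ℝ) :=
  {I | ∃ k : ℤ, isInnerIdx a j k ∧ I = ivl a β j k}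

/-- `𝒜_j`: rectangles `I_1 × ⋯ × I_d` with `I_i ∈ 𝒜_j^i`, encoded by their factors. -/
def rectA {d : ℕ} (a : Fin d → ℝ) (β : ℝ) (j : ℕ) : Set (Fin d → Set ℝ) :=
  {R | ∀ i, R i ∈ partA (a i) β j}

/-- `ℬ_j`: rectangles all of whose factors are inner intervals. -/
def rectB {d : ℕ} (a : Fin d → ℝ) (β : ℝ) (j : ℕ) : Set (Fin d → Set ℝ) :=
  {R | ∀ i, R i ∈ partInner (a i) β j}

/-- `𝒦_j := 𝒜_j ∖ ℬ_j` for `j ≥ 1`. -/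
def rectK {d : ℕ} (a : Fin d → ℝ) (β : ℝ) (j : ℕ) : Set (Fin d → Set ℝ) :=
  rectA a β j \ rectB a β j

/-- `𝒦_0 := {[−1,1)^d}`. -/
def rectK0 (d : ℕ) : Set (Fin d → Set ℝ) := {fun _ => Set.Ico (-1 : ℝ) 1}

/-- `𝒦 := ⋃_{j ≥ 0} 𝒦_j`. -/
def rectKall {d : ℕ} (a : Fin d → ℝ) (β : ℝ) : Set (Fin d → Set ℝ) :=
  rectK0 d ∪ ⋃ (j : ℕ) (_ : 1 ≤ j), rectK a β j

/-- The volume `|R|` of a rectangle, the product of its side lengths. -/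
def rVol {d : ℕ} (R : Fin d → Set ℝ) : ℝ := ∏ i, (volume (R i)).toReal

open scoped ENNReal

/-- The Euclidean norm on `ℝ^d`. -/
def euclNorm {d : ℕ} (x : Fin d → ℝ) : ℝ := Real.sqrt (∑ i, (x i) ^ 2)

/-- The anisotropic dilation `t^{-a} x`. -/
def aDilNeg {d : ℕ} (a : Fin d → ℝ) (t : ℝ) (x : Fin d → ℝ) : Fin d → ℝ :=
  fun i => t ^ (-(a i)) * x i

/-- `nrm` is the anisotropic quasi-norm `|·|_a`. -/
def IsAnisoNorm {d : ℕ} (a : Fin d → ℝ) (nrm : (Fin d → ℝ) → ℝ) : Prop :=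
  nrm 0 = 0 ∧ ∀ x : Fin d → ℝ, x ≠ 0 → 0 < nrm x ∧ euclNorm (aDilNeg a (nrm x) x) = 1

/-- `U(R,n) = { y : |δ_R y − π(n + (1/2,…,1/2))|_a < 1 }` with
`δ_R = diag(|I_1|,…,|I_d|)`. -/
def Uset {d : ℕ} (nrm : (Fin d → ℝ) → ℝ) (R : Fin d → Set ℝ) (n : Fin d → ℕ) :
    Set (Fin d → ℝ) :=
  {y | nrm (fun i => (volume (R i)).toReal * y i - Real.pi * ((n i : ℝ) + 1 / 2)) < 1}

/-- The sequence-space quantity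
`( ∑_{R∈𝒦} ‖ ∑_n |R|^{s/ν+1/2} |s_{R,n}| 𝟙_{U(R,n)} ‖_{L_p}^q )^{1/q}` (in `ℝ≥0∞`). -/
def mixedLpQty {d : ℕ} (nrm : (Fin d → ℝ) → ℝ) (a : Fin d → ℝ) (β s p q : ℝ)
    (coef : (Fin d → Set ℝ) → (Fin d → ℕ) → ℂ) : ℝ≥0∞ :=
  (∑' R : rectKall a β,
      ((∫⁻ x : Fin d → ℝ,
          (∑' n : Fin d → ℕ,
            ENNReal.ofReal (rVol (R : Fin d → Set ℝ) ^ (s / (∑ i, a i) + 1 / 2) *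
                ‖coef (R : Fin d → Set ℝ) n‖) *
              (Uset nrm (R : Fin d → Set ℝ) n).indicator (fun _ => (1 : ℝ≥0∞)) x) ^ p)
        ^ (1 / p)) ^ q) ^ (1 / q)

/-- The discrete quantity
`A = ( ∑_{R∈𝒦} |R|^{(s/ν+1/2−1/p)q} ( ∑_n |s_{R,n}|^p )^{q/p} )^{1/q}` (in `ℝ≥0∞`). -/
def discreteQty {d : ℕ} (a : Fin d → ℝ) (β s p q : ℝ)
    (coef : (Fin d → Set ℝ) → (Fin d → ℕ) → ℂ) : ℝ≥0∞ :=
  (∑' R : rectKall a β,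
      ENNReal.ofReal (rVol (R : Fin d → Set ℝ) ^ ((s / (∑ i, a i) + 1 / 2 - 1 / p) * q)) *
        (∑' n : Fin d → ℕ,
          ENNReal.ofReal (‖coef (R : Fin d → Set ℝ) n‖ ^ p)) ^ (q / p))
    ^ (1 / q)


section Lemmas

lemma knot_strict {a β : ℝ} (ha : 0 < a) (hβ : 0 < β) {j : ℕ} (hj : 1 ≤ j) (k : ℤ) :
    knot a β j k < knot a β j (k + 1) := by
  have hj1 : (1 : ℝ) ≤ (j : ℝ) := by exact_mod_cast hj
  have hj0 : (0 : ℝ) < (j : ℝ) := by linarith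
  have haβ : 0 < a * β := mul_pos ha hβ
  set A := ((j : ℝ) + 1) ^ (a * β) with hAdef
  set B := (j : ℝ) ^ (a * β) with hBdef
  have hB : 0 < B := Real.rpow_pos_of_pos hj0 _
  have hAB : B < A := Real.rpow_lt_rpow hj0.le (by linarith) haβ
  have hmO : 1 ≤ mOut a j := Int.ceil_pos.mpr (Real.rpow_pos_of_pos hj0 _)
  have hmI : 1 ≤ mIn a j := Int.ceil_pos.mpr (Real.rpow_pos_of_pos hj0 _)
  have hmOR : (0 : ℝ) < ((mOut a j : ℤ) : ℝ) := by exact_mod_cast hmO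
  have hmIR : (0 : ℝ) < ((mIn a j : ℤ) : ℝ) := by exact_mod_cast hmI
  have hlO : 0 < lenO a β j := div_pos (by linarith) hmOR
  have hlI : 0 < lenI a β j := div_pos (by linarith) hmIR
  have hOid : ((mOut a j : ℤ) : ℝ) * lenO a β j = A - B := by
    rw [lenO]; field_simp; rfl
  have hIid : ((mIn a j : ℤ) : ℝ) * lenI a β j = 2 * B := by
    rw [lenI]; field_simp; rfl
  rcases le_or_gt (k + 1) (mOut a j) with h | h
  · rw [knot, knot, if_pos (by omega), if_pos h]
    push_cast
    nlinarith [hlO]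
  rcases le_or_gt k (mOut a j) with h2 | h2
  · have hk : k = mOut a j := by omega
    rw [knot, knot, if_pos h2, if_neg (by omega), if_pos (by omega)]
    have hkR : (k : ℝ) = ((mOut a j : ℤ) : ℝ) := by exact_mod_cast hk
    push_cast
    rw [hkR]
    nlinarith [hOid, hlI]
  rcases le_or_gt (k + 1) (mOut a j + mIn a j) with h3 | h3
  · rw [knot, knot, if_neg (by omega), if_pos (by omega), if_neg (by omega), if_pos h3]
    push_cast
    nlinarith [hlI]
  rcases le_or_gt k (mOut a j + mIn a j) with h4 | h4
  · have hk : k = mOut a j + mIn a j := by omega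
    rw [knot, knot, if_neg (by omega), if_pos h4, if_neg (by omega), if_neg (by omega)]
    have hkR : (k : ℝ) = ((mOut a j : ℤ) : ℝ) + ((mIn a j : ℤ) : ℝ) := by exact_mod_cast hk
    push_cast
    rw [hkR]
    nlinarith [hIid, hlO]
  · rw [knot, knot, if_neg (by omega), if_neg (by omega), if_neg (by omega), if_neg (by omega)]
    push_cast
    nlinarith [hlO]
lemma mem_rectKall_Ico {d : ℕ} {a : Fin d → ℝ} (ha : ∀ i, 1 ≤ a i) {β : ℝ} (hβ : 1 ≤ β)
    {R : Fin d → Set ℝ} (hR : R ∈ rectKall a β) (i : Fin d) :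
    ∃ u v : ℝ, u < v ∧ R i = Set.Ico u v := by
  rcases hR with h | h
  · rw [rectK0, Set.mem_singleton_iff] at h
    exact ⟨-1, 1, by norm_num, by rw [h]⟩
  · simp only [Set.mem_iUnion] at h
    obtain ⟨j, hj, hRj⟩ := h
    obtain ⟨k, _, _, hk⟩ := hRj.1 i
    exact ⟨_, _, knot_strict (by linarith [ha i]) (by linarith) hj k, hk⟩

lemma sum_sq_lt_one {d : ℕ} {a : Fin d → ℝ} (ha : ∀ i, 1 ≤ a i) {nrm : (Fin d → ℝ) → ℝ}
    (hnrm : IsAnisoNorm a nrm) (x : Fin d → ℝ) :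
    nrm x < 1 ↔ ∑ i, x i ^ 2 < 1 := by
  by_cases hx : x = 0
  · subst hx
    simp only [hnrm.1, Pi.zero_apply]
    norm_num
  · obtain ⟨ht, h1⟩ := hnrm.2 x hx
    set t := nrm x with htdef
    have hsum : ∑ i, ((t : ℝ) ^ (-(a i)) * x i) ^ 2 = 1 := by
      rw [euclNorm, Real.sqrt_eq_one] at h1
      simpa [aDilNeg] using h1
    -- strict antitonicity of u ↦ ∑ (u^{-a i} x i)^2 on (0, ∞)
    have key : ∀ u v : ℝ, 0 < u → u < v →
        ∑ i, ((v : ℝ) ^ (-(a i)) * x i) ^ 2 < ∑ i, ((u : ℝ) ^ (-(a i)) * x i) ^ 2 := by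
      intro u v hu huv
      obtain ⟨i0, hi0⟩ : ∃ i, x i ≠ 0 := by
        by_contra hcon
        push_neg at hcon
        exact hx (funext hcon)
      refine Finset.sum_lt_sum (fun i _ => ?_) ⟨i0, Finset.mem_univ i0, ?_⟩
      · have h2 : (0:ℝ) < v ^ (-(a i)) := Real.rpow_pos_of_pos (by linarith) _
        have h3 : v ^ (-(a i)) ≤ u ^ (-(a i)) :=
          Real.rpow_le_rpow_of_nonpos hu huv.le (by linarith [ha i])
        have h4 : (v ^ (-(a i)))^2 ≤ (u ^ (-(a i)))^2 := by nlinarith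
        calc (v ^ (-(a i)) * x i)^2 = (v ^ (-(a i)))^2 * (x i)^2 := by ring
          _ ≤ (u ^ (-(a i)))^2 * (x i)^2 := by nlinarith [sq_nonneg (x i)]
          _ = (u ^ (-(a i)) * x i)^2 := by ring
      · have h2 : (0:ℝ) < v ^ (-(a i0)) := Real.rpow_pos_of_pos (by linarith) _
        have h3 : v ^ (-(a i0)) < u ^ (-(a i0)) :=
          Real.rpow_lt_rpow_of_neg hu huv (by linarith [ha i0])
        have h5 : (0:ℝ) < (x i0)^2 := by positivity
        have h6 : (v ^ (-(a i0)))^2 < (u ^ (-(a i0)))^2 := by nlinarith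
        calc (v ^ (-(a i0)) * x i0)^2 = (v ^ (-(a i0)))^2 * (x i0)^2 := by ring
          _ < (u ^ (-(a i0)))^2 * (x i0)^2 := mul_lt_mul_of_pos_right h6 h5
          _ = (u ^ (-(a i0)) * x i0)^2 := by ring
    have hone : ∑ i, ((1 : ℝ) ^ (-(a i)) * x i) ^ 2 = ∑ i, x i ^ 2 := by
      simp [Real.one_rpow]
    constructor
    · intro hlt
      have := key t 1 ht hlt
      rw [hsum, hone] at this
      exact this
    · intro hlt
      by_contra hge
      push_neg at hge
      rcases eq_or_lt_of_le hge with heq | hgt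
      · rw [← heq, hone] at hsum
        linarith
      · have := key 1 t one_pos hgt
        rw [hsum, hone] at this
        linarith
def ballSq (d : ℕ) : Set (Fin d → ℝ) := {x | ∑ i, x i ^ 2 < 1}

lemma measurable_sumsq {d : ℕ} (ℓ cen : Fin d → ℝ) :
    MeasurableSet {y : Fin d → ℝ | ∑ i, (ℓ i * y i - cen i) ^ 2 < 1} := by
  apply measurableSet_lt _ measurable_const
  exact Finset.measurable_sum _ fun i _ =>
    by fun_prop

lemma vol_shiftscale {d : ℕ} (ℓ : Fin d → ℝ) (hℓ : ∀ i, 0 < ℓ i) (cen : Fin d → ℝ) :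
    volume {y : Fin d → ℝ | ∑ i, (ℓ i * y i - cen i) ^ 2 < 1}
      = ENNReal.ofReal (∏ i, ℓ i)⁻¹ * volume (ballSq d) := by
  have hprod : (0:ℝ) < ∏ i, ℓ i := Finset.prod_pos fun i _ => hℓ i
  have hdet : LinearMap.det (Matrix.toLin' (Matrix.diagonal ℓ)) = ∏ i, ℓ i := by
    rw [LinearMap.det_toLin', Matrix.det_diagonal]
  have hset : {y : Fin d → ℝ | ∑ i, (ℓ i * y i - cen i) ^ 2 < 1}
      = (Matrix.toLin' (Matrix.diagonal ℓ)) ⁻¹' ((fun z => z + (-cen)) ⁻¹' ballSq d) := by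
    ext y
    simp only [Set.mem_preimage, ballSq, Set.mem_setOf_eq, Pi.add_apply, Pi.neg_apply,
      Matrix.toLin'_apply, Matrix.mulVec_diagonal, sub_eq_add_neg]
  rw [hset, Measure.addHaar_preimage_linearMap volume (by rw [hdet]; exact hprod.ne') _,
    measure_preimage_add_right, hdet, abs_of_pos (inv_pos.mpr hprod)]

lemma ballSq_vol_pos (d : ℕ) : 0 < volume (ballSq d) := by
  have hsub : Metric.ball (0 : Fin d → ℝ) (1 / ((d : ℝ) + 1)) ⊆ ballSq d := by
    intro x hx
    rw [mem_ball_zero_iff] at hx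
    have hD : (0:ℝ) ≤ (d : ℝ) := Nat.cast_nonneg d
    have hx0 : (0:ℝ) ≤ ‖x‖ := norm_nonneg x
    have hbound : ∑ i, x i ^ 2 ≤ (d : ℝ) * ‖x‖ ^ 2 := by
      calc ∑ i, x i ^ 2 ≤ ∑ _i : Fin d, ‖x‖ ^ 2 := by
            refine Finset.sum_le_sum fun i _ => ?_
            have := norm_le_pi_norm x i
            have h0 : |x i| ≤ ‖x‖ := by simpa [Real.norm_eq_abs] using this
            nlinarith [abs_nonneg (x i), sq_abs (x i)]
        _ = (d : ℝ) * ‖x‖ ^ 2 := by simp [Finset.sum_const, mul_comm]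
    have hD1 : ((d:ℝ) + 1) * (1 / ((d:ℝ) + 1)) = 1 := by field_simp
    have hsq : ‖x‖ ^ 2 < (1 / ((d:ℝ) + 1)) ^ 2 := by nlinarith
    have : (d : ℝ) * ‖x‖ ^ 2 < 1 := by nlinarith
    exact lt_of_le_of_lt hbound this
  exact lt_of_lt_of_le (Metric.measure_ball_pos volume 0 (by positivity)) (measure_mono hsub)

lemma ballSq_vol_lt_top (d : ℕ) : volume (ballSq d) < ⊤ := by
  have hsub : ballSq d ⊆ Metric.ball (0 : Fin d → ℝ) 2 := by
    intro x hx
    rw [mem_ball_zero_iff]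
    have h1 : ‖x‖ ≤ 1 := by
      refine (pi_norm_le_iff_of_nonneg zero_le_one).mpr fun i => ?_
      have h2 : x i ^ 2 ≤ ∑ j, x j ^ 2 :=
        Finset.single_le_sum (fun j _ => sq_nonneg (x j)) (Finset.mem_univ i)
      have h3 : x i ^ 2 ≤ 1 := le_of_lt (lt_of_le_of_lt h2 hx)
      rw [Real.norm_eq_abs]
      nlinarith [abs_nonneg (x i), sq_abs (x i)]
    linarith
  exact lt_of_le_of_lt (measure_mono hsub) measure_ball_lt_top

lemma pi_gt_two : (2:ℝ) < Real.pi := by linarith [Real.pi_gt_three]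

lemma Uset_disj {d : ℕ} (ℓ : Fin d → ℝ) {n m : Fin d → ℕ} (hnm : n ≠ m) :
    Disjoint {y : Fin d → ℝ | ∑ i, (ℓ i * y i - Real.pi * ((n i : ℝ) + 1/2)) ^ 2 < 1}
      {y : Fin d → ℝ | ∑ i, (ℓ i * y i - Real.pi * ((m i : ℝ) + 1/2)) ^ 2 < 1} := by
  rw [Set.disjoint_left]
  intro y hy1 hy2
  apply hnm
  funext i
  simp only [Set.mem_setOf_eq] at hy1 hy2
  have h1 : (ℓ i * y i - Real.pi * ((n i : ℝ) + 1/2)) ^ 2 < 1 :=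
    lt_of_le_of_lt (Finset.single_le_sum
      (f := fun j => (ℓ j * y j - Real.pi * ((n j : ℝ) + 1/2)) ^ 2)
      (fun j _ => sq_nonneg _) (Finset.mem_univ i)) hy1
  have h2 : (ℓ i * y i - Real.pi * ((m i : ℝ) + 1/2)) ^ 2 < 1 :=
    lt_of_le_of_lt (Finset.single_le_sum
      (f := fun j => (ℓ j * y j - Real.pi * ((m j : ℝ) + 1/2)) ^ 2)
      (fun j _ => sq_nonneg _) (Finset.mem_univ i)) hy2
  by_contra hne
  have hge : 1 ≤ |(n i : ℝ) - (m i : ℝ)| := by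
    rcases Nat.lt_or_gt_of_ne hne with h | h
    · have hc : (n i : ℝ) + 1 ≤ (m i : ℝ) := by exact_mod_cast h
      rw [abs_sub_comm, abs_of_nonneg (by linarith)]
      linarith
    · have hc : (m i : ℝ) + 1 ≤ (n i : ℝ) := by exact_mod_cast h
      rw [abs_of_nonneg (by linarith)]
      linarith
  have hπ := pi_gt_two
  have hπpos := Real.pi_pos
  have hd1 : |ℓ i * y i - Real.pi * ((n i : ℝ) + 1/2)| < 1 := by
    nlinarith [abs_nonneg (ℓ i * y i - Real.pi * ((n i : ℝ) + 1/2)),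
      sq_abs (ℓ i * y i - Real.pi * ((n i : ℝ) + 1/2))]
  have hd2 : |ℓ i * y i - Real.pi * ((m i : ℝ) + 1/2)| < 1 := by
    nlinarith [abs_nonneg (ℓ i * y i - Real.pi * ((m i : ℝ) + 1/2)),
      sq_abs (ℓ i * y i - Real.pi * ((m i : ℝ) + 1/2))]
  have hdist : |Real.pi * ((n i : ℝ) + 1/2) - Real.pi * ((m i : ℝ) + 1/2)| < 2 := by
    have := abs_sub_abs_le_abs_sub (ℓ i * y i - Real.pi * ((m i : ℝ) + 1/2))
      (ℓ i * y i - Real.pi * ((n i : ℝ) + 1/2))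
    calc |Real.pi * ((n i : ℝ) + 1/2) - Real.pi * ((m i : ℝ) + 1/2)|
        = |(ℓ i * y i - Real.pi * ((m i : ℝ) + 1/2)) - (ℓ i * y i - Real.pi * ((n i : ℝ) + 1/2))| := by
          ring_nf
      _ ≤ |ℓ i * y i - Real.pi * ((m i : ℝ) + 1/2)| + |ℓ i * y i - Real.pi * ((n i : ℝ) + 1/2)| :=
          abs_sub _ _
      _ < 2 := by linarith
  have : Real.pi * |(n i : ℝ) - (m i : ℝ)| < 2 := by
    calc Real.pi * |(n i : ℝ) - (m i : ℝ)| = |Real.pi * ((n i : ℝ) - (m i : ℝ))| := by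
          rw [abs_mul, abs_of_pos hπpos]
      _ = |Real.pi * ((n i : ℝ) + 1/2) - Real.pi * ((m i : ℝ) + 1/2)| := by ring_nf
      _ < 2 := hdist
  nlinarith
lemma Uset_eq {d : ℕ} {a : Fin d → ℝ} (ha : ∀ i, 1 ≤ a i) {nrm : (Fin d → ℝ) → ℝ}
    (hnrm : IsAnisoNorm a nrm) (R : Fin d → Set ℝ) (n : Fin d → ℕ) :
    Uset nrm R n = {y : Fin d → ℝ |
      ∑ i, ((volume (R i)).toReal * y i - Real.pi * ((n i : ℝ) + 1/2)) ^ 2 < 1} := by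
  ext y
  exact sum_sq_lt_one ha hnrm _

lemma tsum_pow_indicator {α : Type*} {ι : Type*} (U : ι → Set α)
    (hU : Pairwise (Function.onFun Disjoint U)) (C : ι → ℝ≥0∞) {p : ℝ} (hp : 0 < p)
    (x : α) :
    (∑' n, C n * (U n).indicator (fun _ => (1:ℝ≥0∞)) x) ^ p
      = ∑' n, (C n) ^ p * (U n).indicator (fun _ => (1:ℝ≥0∞)) x := by
  by_cases h : ∃ n₀, x ∈ U n₀
  · obtain ⟨n₀, hn₀⟩ := h
    have hz : ∀ n, n ≠ n₀ → x ∉ U n := fun n hn hxn =>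
      Set.disjoint_left.mp (hU hn) hxn hn₀
    rw [tsum_eq_single n₀ (fun n hn => by simp [Set.indicator_of_notMem (hz n hn)]),
        tsum_eq_single n₀ (fun n hn => by simp [Set.indicator_of_notMem (hz n hn)]),
        Set.indicator_of_mem hn₀, mul_one, mul_one]
  · push_neg at h
    have hzero : ∀ n, (U n).indicator (fun _ => (1:ℝ≥0∞)) x = 0 := fun n =>
      Set.indicator_of_notMem (h n) _
    simp only [hzero, mul_zero, tsum_zero]
    exact ENNReal.zero_rpow_of_pos hp

lemma perR {d : ℕ} (ℓ : Fin d → ℝ) (hℓ : ∀ i, 0 < ℓ i) (C : (Fin d → ℕ) → ℝ≥0∞)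
    {p : ℝ} (hp : 0 < p) :
    (∫⁻ x : Fin d → ℝ, (∑' n : Fin d → ℕ,
        C n * ({y : Fin d → ℝ | ∑ i, (ℓ i * y i - Real.pi * ((n i : ℝ) + 1/2)) ^ 2 < 1}).indicator
          (fun _ => (1:ℝ≥0∞)) x) ^ p)
      = (ENNReal.ofReal (∏ i, ℓ i)⁻¹ * volume (ballSq d)) * ∑' n : Fin d → ℕ, (C n) ^ p := by
  set S : (Fin d → ℕ) → Set (Fin d → ℝ) := fun n =>
    {y : Fin d → ℝ | ∑ i, (ℓ i * y i - Real.pi * ((n i : ℝ) + 1/2)) ^ 2 < 1} with hS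
  have hdisj : Pairwise (Function.onFun Disjoint S) := fun n m hnm => Uset_disj ℓ hnm
  have hmeas : ∀ n, MeasurableSet (S n) := fun n => measurable_sumsq ℓ _
  rw [lintegral_congr (fun x => tsum_pow_indicator S hdisj C hp x)]
  rw [lintegral_tsum (fun n => ((measurable_const.indicator (hmeas n)).const_mul _).aemeasurable)]
  have hone : ∀ n : Fin d → ℕ, (∫⁻ x, C n ^ p * (S n).indicator (fun _ => (1:ℝ≥0∞)) x)
      = C n ^ p * (ENNReal.ofReal (∏ i, ℓ i)⁻¹ * volume (ballSq d)) := by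
    intro n
    rw [lintegral_const_mul _ (measurable_const.indicator (hmeas n)),
      lintegral_indicator_const (hmeas n), one_mul, hS]
    rw [vol_shiftscale ℓ hℓ _]
  rw [tsum_congr hone, ENNReal.tsum_mul_right, mul_comm]

lemma perR' {d : ℕ} (R : Fin d → Set ℝ) (hℓ : ∀ i, 0 < (volume (R i)).toReal)
    (C : (Fin d → ℕ) → ℝ≥0∞) {p : ℝ} (hp : 0 < p) :
    (∫⁻ x : Fin d → ℝ, (∑' n : Fin d → ℕ,
        C n * ({y : Fin d → ℝ |
            ∑ i, ((volume (R i)).toReal * y i - Real.pi * ((n i : ℝ) + 1/2)) ^ 2 < 1}).indicator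
          (fun _ => (1:ℝ≥0∞)) x) ^ p)
      = (ENNReal.ofReal (rVol R)⁻¹ * volume (ballSq d)) * ∑' n : Fin d → ℕ, (C n) ^ p :=
  perR (fun i => (volume (R i)).toReal) hℓ C hp

end Lemmas


/-- Eq. (eq:malt): the two-sided discrete characterization
`‖(s_{R,n})‖_{m^{s,α}_{p,q}(a)} ≍ ( ∑_{R∈𝒦} |R|^{(s/ν+1/2−1/p)q} (∑_n |s_{R,n}|^p)^{q/p} )^{1/q}`,
uniformly over all families of complex coefficients (both sides simultaneously finite or
infinite, here expressed in `ℝ≥0∞`). -/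
theorem stmt19 (d : ℕ) (hd : 1 ≤ d) (a : Fin d → ℝ) (ha : ∀ i, 1 ≤ a i)
    (nrm : (Fin d → ℝ) → ℝ) (hnrm : IsAnisoNorm a nrm)
    (β : ℝ) (hβ : 1 ≤ β) (s p q : ℝ) (hp : 0 < p) (hq : 0 < q) :
    ∃ c C : ℝ, 0 < c ∧ c ≤ C ∧
      ∀ coef : (Fin d → Set ℝ) → (Fin d → ℕ) → ℂ,
        ENNReal.ofReal c * discreteQty a β s p q coef ≤
            mixedLpQty nrm a β s p q coef ∧
          mixedLpQty nrm a β s p q coef ≤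
            ENNReal.ofReal C * discreteQty a β s p q coef := by
  classical
  set V := volume (ballSq d) with hVdef
  have hV0 : V ≠ 0 := (ballSq_vol_pos d).ne'
  have hVtop : V ≠ ⊤ := (ballSq_vol_lt_top d).ne
  have hVt0 : 0 < V.toReal := ENNReal.toReal_pos hV0 hVtop
  have hqp : (0:ℝ) ≤ q / p := le_of_lt (div_pos hq hp)
  refine ⟨V.toReal ^ ((1:ℝ)/p), V.toReal ^ ((1:ℝ)/p),
    Real.rpow_pos_of_pos hVt0 _, le_refl _, fun coef => ?_⟩
  have hofc : ENNReal.ofReal (V.toReal ^ ((1:ℝ)/p)) = V ^ ((1:ℝ)/p) := by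
    rw [← ENNReal.ofReal_rpow_of_nonneg ENNReal.toReal_nonneg (by positivity),
      ENNReal.ofReal_toReal hVtop]
  suffices hmain : mixedLpQty nrm a β s p q coef = V ^ ((1:ℝ)/p) * discreteQty a β s p q coef by
    rw [hofc, hmain]
    exact ⟨le_refl _, le_refl _⟩
  have hterm : ∀ R : rectKall a β,
      ((∫⁻ x : Fin d → ℝ,
          (∑' n : Fin d → ℕ,
            ENNReal.ofReal (rVol (R : Fin d → Set ℝ) ^ (s / (∑ i, a i) + 1 / 2) *
                ‖coef (R : Fin d → Set ℝ) n‖) *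
              (Uset nrm (R : Fin d → Set ℝ) n).indicator (fun _ => (1 : ℝ≥0∞)) x) ^ p)
        ^ (1 / p)) ^ q
      = V ^ (q / p) *
        (ENNReal.ofReal (rVol (R : Fin d → Set ℝ) ^ ((s / (∑ i, a i) + 1 / 2 - 1 / p) * q)) *
          (∑' n : Fin d → ℕ,
            ENNReal.ofReal (‖coef (R : Fin d → Set ℝ) n‖ ^ p)) ^ (q / p)) := by
    intro R
    have hR := R.2
    have hℓ : ∀ i, 0 < (volume ((R : Fin d → Set ℝ) i)).toReal := by
      intro i
      obtain ⟨u, v, huv, hIco⟩ := mem_rectKall_Ico ha hβ hR i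
      rw [hIco, Real.volume_Ico, ENNReal.toReal_ofReal (by linarith)]
      linarith
    have hr : 0 < rVol (R : Fin d → Set ℝ) := Finset.prod_pos fun i _ => hℓ i
    simp only [Uset_eq ha hnrm]
    rw [perR' _ hℓ _ hp]
    set r := rVol (R : Fin d → Set ℝ) with hrdef
    set σ := s / (∑ i, a i) + 1 / 2 with hσdef
    set Sn := ∑' n : Fin d → ℕ,
      ENNReal.ofReal (‖coef (R : Fin d → Set ℝ) n‖ ^ p) with hSndef
    have hsum : (∑' n : Fin d → ℕ,
          (ENNReal.ofReal (r ^ σ * ‖coef (R : Fin d → Set ℝ) n‖)) ^ p)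
        = ENNReal.ofReal ((r ^ σ) ^ p) * Sn := by
      rw [hSndef, ← ENNReal.tsum_mul_left]
      refine tsum_congr fun n => ?_
      rw [ENNReal.ofReal_mul (by positivity), ENNReal.mul_rpow_of_nonneg _ _ hp.le,
        ENNReal.ofReal_rpow_of_nonneg (by positivity) hp.le,
        ENNReal.ofReal_rpow_of_nonneg (norm_nonneg _) hp.le]
    rw [hsum, ← ENNReal.rpow_mul, show (1/p) * q = q / p by ring]
    rw [ENNReal.mul_rpow_of_nonneg _ _ hqp, ENNReal.mul_rpow_of_nonneg _ _ hqp,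
      ENNReal.mul_rpow_of_nonneg _ _ hqp]
    rw [ENNReal.ofReal_rpow_of_nonneg (by positivity) hqp,
      ENNReal.ofReal_rpow_of_nonneg (by positivity) hqp]
    have hreal : (r⁻¹) ^ (q/p) * ((r ^ σ) ^ p) ^ (q/p) = r ^ ((σ - 1/p) * q) := by
      rw [Real.inv_rpow hr.le, ← Real.rpow_neg hr.le, ← Real.rpow_mul hr.le,
        ← Real.rpow_mul hr.le, ← Real.rpow_add hr]
      congr 1
      field_simp
      ring
    calc (ENNReal.ofReal (r⁻¹ ^ (q/p)) * V ^ (q/p)) *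
          (ENNReal.ofReal (((r ^ σ) ^ p) ^ (q/p)) * Sn ^ (q/p))
        = (ENNReal.ofReal (r⁻¹ ^ (q/p)) * ENNReal.ofReal (((r ^ σ) ^ p) ^ (q/p))) *
          (V ^ (q/p) * Sn ^ (q/p)) := by ring
      _ = ENNReal.ofReal (r ^ ((σ - 1/p) * q)) * (V ^ (q/p) * Sn ^ (q/p)) := by
          rw [← ENNReal.ofReal_mul (by positivity), hreal]
      _ = V ^ (q/p) * (ENNReal.ofReal (r ^ ((σ - 1/p) * q)) * Sn ^ (q/p)) := by ring
  rw [mixedLpQty, discreteQty, tsum_congr hterm, ENNReal.tsum_mul_left,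
    ENNReal.mul_rpow_of_nonneg _ _ (le_of_lt (one_div_pos.mpr hq)),
    ← ENNReal.rpow_mul, show (q/p) * (1/q) = 1/p by field_simp]
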